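/- Let γ = (γ_k)_{k∈ℤ} be a bounded sequence of complex numbers with q₂(γ) < ∞. For m ∈ ℤ let δ^{(m)} be the sequence δ^{(m)}_k = k·(γ_k − γ_{k+m}). Then there exists a constant C > 0, independent of γ and m, such that for every m ∈ ℤ one has q₁(δ^{(m)}) ≤ C·|m|³·q₂(γ), i.e. sup_{k∈ℤ}|δ^{(m)}_k| + sup_{k∈ℤ}|k·(δ^{(m)}_k − δ^{(m)}_{k+1})| ≤ C·|m|³·q₂(γ). -/

import Mathlib

/-- The norm `q₁(γ) = sup_k |γ_k| + sup_k |k·(Δγ)_k|`, where `(Δγ)_k = γ_k - γ_{k+1}`. -/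
noncomputable def q1 (γ : ℤ → ℂ) : ℝ :=
  (⨆ k : ℤ, ‖γ k‖) + ⨆ k : ℤ, ‖(k : ℂ) * (γ k - γ (k + 1))‖

/-- The norm `q₂(γ) = q₁(γ) + sup_k |k²·(Δ²γ)_k|`, where
`(Δ²γ)_k = γ_k - 2γ_{k+1} + γ_{k+2}`. -/
noncomputable def q2 (γ : ℤ → ℂ) : ℝ :=
  q1 γ + ⨆ k : ℤ, ‖(k : ℂ) ^ 2 * (γ k - 2 * γ (k + 1) + γ (k + 2))‖

/-- The sequence `δ^{(m)}_k = k·(γ_k − γ_{k+m})`. -/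
noncomputable def deltaSeq (γ : ℤ → ℂ) (m k : ℤ) : ℂ :=
  (k : ℂ) * (γ k - γ (k + m))

/-- If `γ` is a bounded sequence with `q₂(γ) < ∞` (i.e. all three sups defining `q₂(γ)`
are finite), then there is a constant `C > 0`, independent of `γ` and `m`, such that for
all `m ∈ ℤ` the sequence `δ^{(m)}` satisfies `q₁(δ^{(m)}) ≤ C·|m|³·q₂(γ)`, i.e.
`sup_k |δ^{(m)}_k| + sup_k |k·(δ^{(m)}_k − δ^{(m)}_{k+1})| ≤ C·|m|³·q₂(γ)` (both sups
being finite). -/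


lemma sq_to_lin (x : ℤ → ℂ) (D : ℝ) (hD : ∀ k : ℤ, ‖(k:ℂ)^2 * x k‖ ≤ D) :
    ∀ k : ℤ, ‖(k:ℂ) * x k‖ ≤ D := by
  intro k
  rcases eq_or_ne k 0 with rfl | hk
  · simpa using hD 0
  · have h1 : (1:ℝ) ≤ ‖(k:ℂ)‖ := by
      have : (1:ℤ) ≤ |k| := Int.one_le_abs hk
      have h2 : ‖(k:ℂ)‖ = |(k:ℝ)| := by norm_cast
      rw [h2, ← Int.cast_abs]
      exact_mod_cast this
    calc ‖(k:ℂ) * x k‖ ≤ ‖(k:ℂ)‖ * ‖(k:ℂ) * x k‖ := le_mul_of_one_le_left (norm_nonneg _) h1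
    _ = ‖(k:ℂ)^2 * x k‖ := by rw [← norm_mul]; ring_nf
    _ ≤ D := hD k

lemma shift1 (γ : ℤ → ℂ) (A B : ℝ) (hA : ∀ k, ‖γ k‖ ≤ A)
    (hB : ∀ k : ℤ, ‖(k:ℂ) * (γ k - γ (k+1))‖ ≤ B) (k j : ℤ) :
    ‖(k:ℂ) * (γ j - γ (j+1))‖ ≤ B + |((k - j : ℤ) : ℝ)| * (2 * A) := by
  have h : (k:ℂ) * (γ j - γ (j+1)) =
      (j:ℂ) * (γ j - γ (j+1)) + ((k-j : ℤ):ℂ) * (γ j - γ (j+1)) := by push_cast; ring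
  rw [h]
  refine (norm_add_le _ _).trans (add_le_add (hB j) ?_)
  rw [norm_mul]
  have h2 : ‖((k-j:ℤ):ℂ)‖ = |((k-j:ℤ):ℝ)| := by norm_cast
  rw [h2]
  have h3 : ‖γ j - γ (j+1)‖ ≤ 2 * A := by
    calc ‖γ j - γ (j+1)‖ ≤ ‖γ j‖ + ‖γ (j+1)‖ := norm_sub_le _ _
    _ ≤ 2 * A := by have := hA j; have := hA (j+1); linarith
  exact mul_le_mul_of_nonneg_left h3 (abs_nonneg _)

lemma shift2 (β : ℤ → ℂ) (A B D : ℝ) (hA : ∀ k, ‖β k‖ ≤ A)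
    (hB : ∀ k : ℤ, ‖(k:ℂ) * (β k - β (k+1))‖ ≤ B)
    (hD : ∀ k : ℤ, ‖(k:ℂ)^2 * (β k - β (k+1))‖ ≤ D) (k j : ℤ) :
    ‖(k:ℂ)^2 * (β j - β (j+1))‖ ≤
      D + 2 * |((k-j:ℤ):ℝ)| * B + |((k-j:ℤ):ℝ)|^2 * (2 * A) := by
  have h : (k:ℂ)^2 * (β j - β (j+1)) =
      (j:ℂ)^2 * (β j - β (j+1)) + (2 * ((k-j:ℤ):ℂ)) * ((j:ℂ) * (β j - β (j+1)))
        + ((k-j:ℤ):ℂ)^2 * (β j - β (j+1)) := by push_cast; ring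
  rw [h]
  have hc : ‖((k-j:ℤ):ℂ)‖ = |((k-j:ℤ):ℝ)| := by norm_cast
  have h3 : ‖β j - β (j+1)‖ ≤ 2 * A := by
    calc ‖β j - β (j+1)‖ ≤ ‖β j‖ + ‖β (j+1)‖ := norm_sub_le _ _
    _ ≤ 2 * A := by have := hA j; have := hA (j+1); linarith
  refine (norm_add_le _ _).trans ?_
  refine add_le_add ((norm_add_le _ _).trans (add_le_add (hD j) ?_)) ?_
  · rw [norm_mul, norm_mul]
    have h2n : ‖(2:ℂ)‖ = 2 := by norm_num
    rw [h2n, hc]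
    exact mul_le_mul_of_nonneg_left (hB j) (by positivity)
  · rw [norm_mul, norm_pow, hc]
    exact mul_le_mul_of_nonneg_left h3 (by positivity)


lemma tele1 (γ : ℤ → ℂ) (A B : ℝ) (hA : ∀ k, ‖γ k‖ ≤ A)
    (hB : ∀ k : ℤ, ‖(k:ℂ) * (γ k - γ (k+1))‖ ≤ B) :
    ∀ m k : ℤ, ‖(k:ℂ) * (γ k - γ (k+m))‖ ≤ |(m:ℝ)| * B + 2 * |(m:ℝ)|^2 * A := by
  have hA0 : 0 ≤ A := le_trans (norm_nonneg _) (hA 0)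
  have hB0 : 0 ≤ B := le_trans (norm_nonneg _) (hB 0)
  intro m
  induction m using Int.induction_on with
  | zero => intro k; simp
  | succ n ih =>
    intro k
    have key : (k:ℂ) * (γ k - γ (k + ((n:ℤ)+1))) =
        (k:ℂ) * (γ k - γ (k+(n:ℤ))) + (k:ℂ) * (γ (k+(n:ℤ)) - γ ((k+(n:ℤ))+1)) := by
      rw [show (k + ((n:ℤ)+1)) = (k+(n:ℤ))+1 by ring]; ring
    rw [key]
    have h1 := ih k
    have h2 := shift1 γ A B hA hB k (k+(n:ℤ))
    have h3 : |((k - (k+(n:ℤ)) : ℤ) : ℝ)| = (n:ℝ) := by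
      push_cast; rw [show (k:ℝ) - ((k:ℝ)+(n:ℝ)) = -(n:ℝ) by ring, abs_neg,
        abs_of_nonneg (by positivity)]
    rw [h3] at h2
    push_cast at h1
    rw [abs_of_nonneg (show (0:ℝ) ≤ (n:ℝ) by positivity)] at h1
    calc ‖_ + _‖ ≤ ‖(k:ℂ) * (γ k - γ (k+(n:ℤ)))‖ + ‖(k:ℂ) * (γ (k+(n:ℤ)) - γ ((k+(n:ℤ))+1))‖ :=
          norm_add_le _ _
    _ ≤ ((n:ℝ) * B + 2 * (n:ℝ)^2 * A) + (B + (n:ℝ) * (2 * A)) := add_le_add h1 h2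
    _ ≤ |(((n:ℤ)+1:ℤ):ℝ)| * B + 2 * |(((n:ℤ)+1:ℤ):ℝ)|^2 * A := by
        push_cast
        rw [abs_of_nonneg (show (0:ℝ) ≤ (n:ℝ)+1 by positivity)]
        nlinarith
  | pred n ih =>
    intro k
    have key : (k:ℂ) * (γ k - γ (k + (-(n:ℤ)-1))) =
        (k:ℂ) * (γ k - γ (k+(-(n:ℤ)))) - (k:ℂ) * (γ (k-(n:ℤ)-1) - γ ((k-(n:ℤ)-1)+1)) := by
      rw [show (k + (-(n:ℤ)-1)) = k-(n:ℤ)-1 by ring, show ((k-(n:ℤ)-1)+1) = k + (-(n:ℤ)) by ring]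
      ring
    rw [key]
    have h1 := ih k
    have h2 := shift1 γ A B hA hB k (k-(n:ℤ)-1)
    have h3 : |((k - (k-(n:ℤ)-1) : ℤ) : ℝ)| = (n:ℝ)+1 := by
      push_cast
      rw [show (k:ℝ) - ((k:ℝ)-(n:ℝ)-1) = (n:ℝ)+1 by ring, abs_of_nonneg (by positivity)]
    rw [h3] at h2
    push_cast at h1
    rw [show |(-(n:ℝ))| = (n:ℝ) by rw [abs_neg, abs_of_nonneg (by positivity)]] at h1
    calc ‖_ - _‖ ≤ ‖(k:ℂ) * (γ k - γ (k+(-(n:ℤ))))‖ + ‖(k:ℂ) * (γ (k-(n:ℤ)-1) - γ ((k-(n:ℤ)-1)+1))‖ :=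
          norm_sub_le _ _
    _ ≤ ((n:ℝ) * B + 2 * (n:ℝ)^2 * A) + (B + ((n:ℝ)+1) * (2 * A)) := add_le_add h1 h2
    _ ≤ |((-(n:ℤ)-1:ℤ):ℝ)| * B + 2 * |((-(n:ℤ)-1:ℤ):ℝ)|^2 * A := by
        push_cast
        rw [show -(n:ℝ)-1 = -((n:ℝ)+1) by ring, abs_neg,
          abs_of_nonneg (show (0:ℝ) ≤ (n:ℝ)+1 by positivity)]
        nlinarith


lemma tele2 (β : ℤ → ℂ) (A B D : ℝ) (hA : ∀ k, ‖β k‖ ≤ A)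
    (hB : ∀ k : ℤ, ‖(k:ℂ) * (β k - β (k+1))‖ ≤ B)
    (hD : ∀ k : ℤ, ‖(k:ℂ)^2 * (β k - β (k+1))‖ ≤ D) :
    ∀ m k : ℤ, ‖(k:ℂ)^2 * (β k - β (k+m))‖ ≤
      |(m:ℝ)| * D + 2 * |(m:ℝ)|^2 * B + 2 * |(m:ℝ)|^3 * A := by
  have hA0 : 0 ≤ A := le_trans (norm_nonneg _) (hA 0)
  have hB0 : 0 ≤ B := le_trans (norm_nonneg _) (hB 0)
  have hD0 : 0 ≤ D := le_trans (norm_nonneg _) (hD 0)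
  intro m
  induction m using Int.induction_on with
  | zero => intro k; simp
  | succ n ih =>
    intro k
    have key : (k:ℂ)^2 * (β k - β (k + ((n:ℤ)+1))) =
        (k:ℂ)^2 * (β k - β (k+(n:ℤ))) + (k:ℂ)^2 * (β (k+(n:ℤ)) - β ((k+(n:ℤ))+1)) := by
      rw [show (k + ((n:ℤ)+1)) = (k+(n:ℤ))+1 by ring]; ring
    rw [key]
    have h1 := ih k
    have h2 := shift2 β A B D hA hB hD k (k+(n:ℤ))
    have h3 : |((k - (k+(n:ℤ)) : ℤ) : ℝ)| = (n:ℝ) := by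
      push_cast; rw [show (k:ℝ) - ((k:ℝ)+(n:ℝ)) = -(n:ℝ) by ring, abs_neg,
        abs_of_nonneg (by positivity)]
    rw [h3] at h2
    push_cast at h1
    rw [abs_of_nonneg (show (0:ℝ) ≤ (n:ℝ) by positivity)] at h1
    calc ‖_ + _‖ ≤ ‖(k:ℂ)^2 * (β k - β (k+(n:ℤ)))‖ + ‖(k:ℂ)^2 * (β (k+(n:ℤ)) - β ((k+(n:ℤ))+1))‖ :=
          norm_add_le _ _
    _ ≤ ((n:ℝ) * D + 2 * (n:ℝ)^2 * B + 2 * (n:ℝ)^3 * A)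
        + (D + 2 * (n:ℝ) * B + (n:ℝ)^2 * (2 * A)) := add_le_add h1 h2
    _ ≤ |(((n:ℤ)+1:ℤ):ℝ)| * D + 2 * |(((n:ℤ)+1:ℤ):ℝ)|^2 * B + 2 * |(((n:ℤ)+1:ℤ):ℝ)|^3 * A := by
        push_cast
        rw [abs_of_nonneg (show (0:ℝ) ≤ (n:ℝ)+1 by positivity)]
        nlinarith [sq_nonneg ((n:ℝ)+1), pow_nonneg (show (0:ℝ) ≤ (n:ℝ) by positivity) 3]
  | pred n ih =>
    intro k
    have key : (k:ℂ)^2 * (β k - β (k + (-(n:ℤ)-1))) =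
        (k:ℂ)^2 * (β k - β (k+(-(n:ℤ)))) - (k:ℂ)^2 * (β (k-(n:ℤ)-1) - β ((k-(n:ℤ)-1)+1)) := by
      rw [show (k + (-(n:ℤ)-1)) = k-(n:ℤ)-1 by ring, show ((k-(n:ℤ)-1)+1) = k + (-(n:ℤ)) by ring]
      ring
    rw [key]
    have h1 := ih k
    have h2 := shift2 β A B D hA hB hD k (k-(n:ℤ)-1)
    have h3 : |((k - (k-(n:ℤ)-1) : ℤ) : ℝ)| = (n:ℝ)+1 := by
      push_cast
      rw [show (k:ℝ) - ((k:ℝ)-(n:ℝ)-1) = (n:ℝ)+1 by ring, abs_of_nonneg (by positivity)]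
    rw [h3] at h2
    push_cast at h1
    rw [show |(-(n:ℝ))| = (n:ℝ) by rw [abs_neg, abs_of_nonneg (by positivity)]] at h1
    calc ‖_ - _‖ ≤ ‖(k:ℂ)^2 * (β k - β (k+(-(n:ℤ))))‖
          + ‖(k:ℂ)^2 * (β (k-(n:ℤ)-1) - β ((k-(n:ℤ)-1)+1))‖ := norm_sub_le _ _
    _ ≤ ((n:ℝ) * D + 2 * (n:ℝ)^2 * B + 2 * (n:ℝ)^3 * A)
        + (D + 2 * ((n:ℝ)+1) * B + ((n:ℝ)+1)^2 * (2 * A)) := add_le_add h1 h2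
    _ ≤ |((-(n:ℤ)-1:ℤ):ℝ)| * D + 2 * |((-(n:ℤ)-1:ℤ):ℝ)|^2 * B + 2 * |((-(n:ℤ)-1:ℤ):ℝ)|^3 * A := by
        push_cast
        rw [show -(n:ℝ)-1 = -((n:ℝ)+1) by ring, abs_neg,
          abs_of_nonneg (show (0:ℝ) ≤ (n:ℝ)+1 by positivity)]
        nlinarith [sq_nonneg ((n:ℝ)+1), pow_nonneg (show (0:ℝ) ≤ (n:ℝ) by positivity) 3]

theorem stmt1 :
    ∃ C > (0 : ℝ), ∀ γ : ℤ → ℂ,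
      BddAbove (Set.range fun k : ℤ => ‖γ k‖) →
      BddAbove (Set.range fun k : ℤ => ‖(k : ℂ) * (γ k - γ (k + 1))‖) →
      BddAbove (Set.range fun k : ℤ => ‖(k : ℂ) ^ 2 * (γ k - 2 * γ (k + 1) + γ (k + 2))‖) →
      ∀ m : ℤ,
        BddAbove (Set.range fun k : ℤ => ‖deltaSeq γ m k‖) ∧
        BddAbove (Set.range fun k : ℤ =>
          ‖(k : ℂ) * (deltaSeq γ m k - deltaSeq γ m (k + 1))‖) ∧
        (⨆ k : ℤ, ‖deltaSeq γ m k‖) +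
            (⨆ k : ℤ, ‖(k : ℂ) * (deltaSeq γ m k - deltaSeq γ m (k + 1))‖) ≤
          C * |(m : ℝ)| ^ 3 * q2 γ := by
  refine ⟨10, by norm_num, ?_⟩
  intro γ h₁ h₂ h₃ m
  set A := ⨆ k : ℤ, ‖γ k‖ with hAdef
  set B := ⨆ k : ℤ, ‖(k : ℂ) * (γ k - γ (k + 1))‖ with hBdef
  set D := ⨆ k : ℤ, ‖(k : ℂ) ^ 2 * (γ k - 2 * γ (k + 1) + γ (k + 2))‖ with hDdef
  have hA : ∀ k : ℤ, ‖γ k‖ ≤ A := fun k => le_ciSup h₁ k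
  have hB : ∀ k : ℤ, ‖(k:ℂ) * (γ k - γ (k + 1))‖ ≤ B := fun k => le_ciSup h₂ k
  have hDh : ∀ k : ℤ, ‖(k:ℂ)^2 * (γ k - 2 * γ (k + 1) + γ (k + 2))‖ ≤ D := fun k => le_ciSup h₃ k
  have hA0 : 0 ≤ A := le_trans (norm_nonneg _) (hA 0)
  have hB0 : 0 ≤ B := le_trans (norm_nonneg _) (hB 0)
  have hD0 : 0 ≤ D := le_trans (norm_nonneg _) (hDh 0)
  set M := |(m:ℝ)| with hMdef
  have hM0 : 0 ≤ M := abs_nonneg _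
  -- first pointwise bound
  have hP1 : ∀ k : ℤ, ‖deltaSeq γ m k‖ ≤ M * B + 2 * M^2 * A := by
    intro k
    exact tele1 γ A B hA hB m k
  -- auxiliary sequences
  set β : ℤ → ℂ := fun j => γ j - γ (j + 1) with hβdef
  have hβA : ∀ k : ℤ, ‖β k‖ ≤ 2 * A := by
    intro k
    calc ‖β k‖ ≤ ‖γ k‖ + ‖γ (k+1)‖ := norm_sub_le _ _
    _ ≤ 2 * A := by have := hA k; have := hA (k+1); linarith
  have hβD : ∀ k : ℤ, ‖(k:ℂ)^2 * (β k - β (k+1))‖ ≤ D := by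
    intro k
    have e : β k - β (k+1) = γ k - 2 * γ (k + 1) + γ (k + 2) := by
      simp only [hβdef]
      rw [show k+1+1 = k+2 by ring]
      ring
    rw [e]; exact hDh k
  have hβB : ∀ k : ℤ, ‖(k:ℂ) * (β k - β (k+1))‖ ≤ D :=
    sq_to_lin (fun k => β k - β (k+1)) D hβD
  set γ' : ℤ → ℂ := fun j => γ (j + 1) with hγ'def
  have hA' : ∀ k : ℤ, ‖γ' k‖ ≤ A := fun k => hA (k+1)
  have hB' : ∀ k : ℤ, ‖(k:ℂ) * (γ' k - γ' (k+1))‖ ≤ B + 2 * A := by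
    intro k
    have h := shift1 γ A B hA hB k (k+1)
    have e : |((k - (k+1) : ℤ) : ℝ)| = 1 := by
      rw [show k - (k+1) = (-1 : ℤ) by ring]; norm_num
    rw [e] at h
    simpa only [hγ'def, one_mul] using h
  -- second pointwise bound
  have hP2 : ∀ k : ℤ, ‖(k:ℂ) * (deltaSeq γ m k - deltaSeq γ m (k + 1))‖ ≤
      (M * D + 2 * M^2 * D + 2 * M^3 * (2 * A)) + (M * (B + 2*A) + 2 * M^2 * A) := by
    intro k
    have hid : (k:ℂ) * (deltaSeq γ m k - deltaSeq γ m (k + 1)) =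
        (k:ℂ)^2 * (β k - β (k + m)) - (k:ℂ) * (γ' k - γ' (k + m)) := by
      simp only [deltaSeq, hβdef, hγ'def]
      rw [show k+1+m = k+m+1 by ring]
      push_cast
      ring
    rw [hid]
    have h1 := tele2 β (2*A) D D hβA hβB hβD m k
    have h2 := tele1 γ' A (B + 2*A) hA' hB' m k
    calc ‖_ - _‖ ≤ ‖(k:ℂ)^2 * (β k - β (k + m))‖ + ‖(k:ℂ) * (γ' k - γ' (k + m))‖ :=
          norm_sub_le _ _
    _ ≤ (M * D + 2 * M^2 * D + 2 * M^3 * (2 * A)) + (M * (B + 2*A) + 2 * M^2 * A) :=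
          add_le_add h1 h2
  have bdd1 : BddAbove (Set.range fun k : ℤ => ‖deltaSeq γ m k‖) :=
    ⟨M * B + 2 * M^2 * A, by rintro x ⟨k, rfl⟩; exact hP1 k⟩
  have bdd2 : BddAbove (Set.range fun k : ℤ =>
      ‖(k : ℂ) * (deltaSeq γ m k - deltaSeq γ m (k + 1))‖) :=
    ⟨_, by rintro x ⟨k, rfl⟩; exact hP2 k⟩
  refine ⟨bdd1, bdd2, ?_⟩
  have s1 : (⨆ k : ℤ, ‖deltaSeq γ m k‖) ≤ M * B + 2 * M^2 * A := ciSup_le hP1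
  have s2 : (⨆ k : ℤ, ‖(k : ℂ) * (deltaSeq γ m k - deltaSeq γ m (k + 1))‖) ≤
      (M * D + 2 * M^2 * D + 2 * M^3 * (2 * A)) + (M * (B + 2*A) + 2 * M^2 * A) := ciSup_le hP2
  have hq2 : q2 γ = A + B + D := by rw [q2, q1]
  rw [hq2]
  rcases eq_or_ne m 0 with rfl | hm
  · have : M = 0 := by simp [hMdef]
    rw [this] at s1 s2 ⊢
    norm_num at s1 s2 ⊢
    linarith
  · have hM1 : (1:ℝ) ≤ M := by
      rw [hMdef, ← Int.cast_abs]
      exact_mod_cast Int.one_le_abs hm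
    have hM3 : M ≤ M^3 := by nlinarith
    have hM23 : M^2 ≤ M^3 := by nlinarith
    nlinarith [mul_le_mul_of_nonneg_right hM3 hA0, mul_le_mul_of_nonneg_right hM23 hA0,
      mul_le_mul_of_nonneg_right hM3 hB0, mul_le_mul_of_nonneg_right hM23 hB0,
      mul_le_mul_of_nonneg_right hM3 hD0, mul_le_mul_of_nonneg_right hM23 hD0]
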